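/- If P = [x_1,...,x_m] is a pointer list satisfying: (a) no two adjacent entries are equal, and (b) any two entries of equal absolute value are equal, then there exist indices i < j < k < ℓ with x_i = x_k and x_j = x_ℓ (i.e., a context-directed block swap is applicable). -/
import Mathlib


/-- A finite sequence of integers (0-indexed list) is a *pointer list*:
(1) even positive length; (2) unique index of minimum absolute value;
(3) unique index of maximum absolute value; (4) each intermediate absolute
value occurs at exactly one other index; (5) for each even (0-based) index i,
x i ≤ x (i+1) and x i * x (i+1) > 0; (6) for each even (0-based) index i no
entry has absolute value strictly between |x i| and |x (i+1)|. -/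
def IsPointerList (P : List ℤ) : Prop :=
  P.length % 2 = 0 ∧ 0 < P.length ∧
  (∃! i, i < P.length ∧ ∀ j < P.length, |P.getD i 0| ≤ |P.getD j 0|) ∧
  (∃! i, i < P.length ∧ ∀ j < P.length, |P.getD j 0| ≤ |P.getD i 0|) ∧
  (∀ i < P.length, (∃ j < P.length, |P.getD j 0| < |P.getD i 0|) →
      (∃ j < P.length, |P.getD i 0| < |P.getD j 0|) →
      ∃! j, j < P.length ∧ j ≠ i ∧ |P.getD j 0| = |P.getD i 0|) ∧
  (∀ i, i % 2 = 0 → i + 1 < P.length →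
      P.getD i 0 ≤ P.getD (i+1) 0 ∧ 0 < P.getD i 0 * P.getD (i+1) 0) ∧
  (∀ i, i % 2 = 0 → i + 1 < P.length →
      ¬ ∃ j < P.length,
        (|P.getD i 0| < |P.getD j 0| ∧ |P.getD j 0| < |P.getD (i+1) 0|) ∨
        (|P.getD (i+1) 0| < |P.getD j 0| ∧ |P.getD j 0| < |P.getD i 0|))

-- Context directed excision: delete the first adjacent equal pair, if any.
open Classical in
noncomputable def cde (P : List ℤ) : List ℤ :=
  if h : ∃ i, i + 1 < P.length ∧ P.getD i 0 = P.getD (i+1) 0 then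
    P.take (Nat.find h) ++ P.drop (Nat.find h + 2)
  else P

-- Context directed reversal: for the minimal i admitting j > i with
-- x i = -(x j) (and the minimal such j), reverse and negate the segment
-- from position i+1 through j.
open Classical in
noncomputable def cdr (P : List ℤ) : List ℤ :=
  if h : ∃ i, ∃ j, i < j ∧ j < P.length ∧ P.getD i 0 = -(P.getD j 0) then
    let i := Nat.find h
    let j := Nat.find (Nat.find_spec h)
    P.take (i+1) ++ (((P.drop (i+1)).take (j - i)).reverse.map (fun z => -z)) ++
      P.drop (j+1)
  else P

-- Context directed block swap: for the lexicographically least (i, j)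
-- admitting k, ℓ with i < j < k < ℓ, x i = x k, x j = x ℓ, interchange
-- the blocks x_{i+1}..x_{j-1} and x_k..x_ℓ.
open Classical in
noncomputable def cds (P : List ℤ) : List ℤ :=
  if h : ∃ i, ∃ j, ∃ k, ∃ l, i < j ∧ j < k ∧ k < l ∧ l < P.length ∧
      P.getD i 0 = P.getD k 0 ∧ P.getD j 0 = P.getD l 0 then
    let i := Nat.find h
    let j := Nat.find (Nat.find_spec h)
    let k := Nat.find (Nat.find_spec (Nat.find_spec h))
    let l := Nat.find (Nat.find_spec (Nat.find_spec (Nat.find_spec h)))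
    P.take (i+1) ++ ((P.drop k).take (l - k + 1)) ++ ((P.drop j).take (k - j)) ++
      ((P.drop (i+1)).take (j - i - 1)) ++ P.drop (l+1)
  else P

/-- The doubling map π: each entry z is replaced by (z, z+1) if z > 0
and by (z-1, z) if z < 0. -/
def piMap (M : List ℤ) : List ℤ :=
  M.flatMap (fun z => if 0 < z then [z, z + 1] else [z - 1, z])

/-- One step of the HNS algorithm: apply cde if applicable, else cds if
applicable, else cdr. -/
noncomputable def hnsStep (P : List ℤ) : List ℤ :=
  if cde P ≠ P then cde P else if cds P ≠ P then cds P else cdr P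


theorem stmt15_aux (x : ℕ → ℤ) (n : ℕ)
    (heven : n % 2 = 0)
    (hlen : 4 < n)
    (hmin : ∃! i, i < n ∧ ∀ j < n, |x i| ≤ |x j|)
    (hmax : ∃! i, i < n ∧ ∀ j < n, |x j| ≤ |x i|)
    (hpair : ∀ i < n, (∃ j < n, |x j| < |x i|) → (∃ j < n, |x i| < |x j|) →
        ∃! j, j < n ∧ j ≠ i ∧ |x j| = |x i|)
    (hblk : ∀ i, i % 2 = 0 → i + 1 < n → x i ≤ x (i+1) ∧ 0 < x i * x (i+1))
    (hgap : ∀ i, i % 2 = 0 → i + 1 < n → ¬ ∃ j < n,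
          (|x i| < |x j| ∧ |x j| < |x (i+1)|) ∨
          (|x (i+1)| < |x j| ∧ |x j| < |x i|))
    (ha : ∀ i, i + 1 < n → x i ≠ x (i+1))
    (hb : ∀ i < n, ∀ j < n, |x i| = |x j| → x i = x j) :
    ∃ i j k l, i < j ∧ j < k ∧ k < l ∧ l < n ∧ x i = x k ∧ x j = x l := by
  classical
  by_contra hgoal
  obtain ⟨mi, ⟨hmilt, hmi2⟩, hmiu⟩ := hmin
  obtain ⟨ma, ⟨hmalt, hma2⟩, hmau⟩ := hmax
  have hminlt : ∀ j, j < n → j ≠ mi → |x mi| < |x j| := by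
    intro j hj hne
    rcases lt_or_eq_of_le (hmi2 j hj) with h | h
    · exact h
    · exact absurd (hmiu j ⟨hj, fun k hk => by rw [← h]; exact hmi2 k hk⟩) hne
  have hmaxlt : ∀ j, j < n → j ≠ ma → |x j| < |x ma| := by
    intro j hj hne
    rcases lt_or_eq_of_le (hma2 j hj) with h | h
    · exact h
    · exact absurd (hmau j ⟨hj, fun k hk => by rw [h]; exact hma2 k hk⟩) hne
  have hpartner : ∀ c, c < n → c ≠ mi → c ≠ ma →
      ∃! j, j < n ∧ j ≠ c ∧ |x j| = |x c| :=
    fun c hc h1 h2 => hpair c hc ⟨mi, hmilt, hminlt c hc h1⟩ ⟨ma, hmalt, hmaxlt c hc h2⟩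
  -- some index distinct from mi and ma
  have hc3 : ∃ c, c < n ∧ c ≠ mi ∧ c ≠ ma := by
    by_cases h0 : 0 ≠ mi ∧ 0 ≠ ma
    · exact ⟨0, by omega, h0.1, h0.2⟩
    by_cases h1 : 1 ≠ mi ∧ 1 ≠ ma
    · exact ⟨1, by omega, h1.1, h1.2⟩
    by_cases h2 : 2 ≠ mi ∧ 2 ≠ ma
    · exact ⟨2, by omega, h2.1, h2.2⟩
    have h0' : 0 = mi ∨ 0 = ma := by tauto
    have h1' : 1 = mi ∨ 1 = ma := by tauto
    have h2' : 2 = mi ∨ 2 = ma := by tauto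
    rcases h0' with h|h <;> rcases h1' with h'|h' <;> rcases h2' with h''|h'' <;> omega
  -- a pair of equal entries exists
  have hQ : ∃ g, 0 < g ∧ ∃ a, a + g < n ∧ x a = x (a + g) := by
    obtain ⟨c, hc, hc1, hc2⟩ := hc3
    obtain ⟨d, ⟨hd, hdc, hdabs⟩, -⟩ := hpartner c hc hc1 hc2
    have hxd : x d = x c := hb d hd c hc hdabs
    rcases lt_or_gt_of_ne hdc with h | h
    · exact ⟨c - d, by omega, d, by omega,
        by rw [show d + (c - d) = c by omega]; exact hxd⟩
    · exact ⟨d - c, by omega, c, by omega,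
        by rw [show c + (d - c) = d by omega]; exact hxd.symm⟩
  obtain ⟨hgpos, a, hab, hxab⟩ := Nat.find_spec hQ
  have hglb : ∀ u v, u < v → v < n → x u = x v → Nat.find hQ ≤ v - u := by
    intro u v huv hv hxe
    exact Nat.find_min' hQ ⟨by omega, u, by omega,
      by rw [show u + (v - u) = v by omega]; exact hxe⟩
  set g := Nat.find hQ with hgdef
  have hg1 : g ≠ 1 := by
    intro h
    rw [h] at hxab hab
    exact ha a hab hxab
  have hg2 : 2 ≤ g := by omega
  -- every interior index of the minimal pair is mi or ma
  have hint : ∀ c, a < c → c < a + g → c = mi ∨ c = ma := by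
    intro c hac hca
    by_contra hcm
    push_neg at hcm
    have hcn : c < n := by omega
    obtain ⟨d, ⟨hd, hdc, hdabs⟩, -⟩ := hpartner c hcn hcm.1 hcm.2
    have hxdc : x d = x c := hb d hd c hcn hdabs
    have hxca : |x c| ≠ |x a| := by
      intro h
      have hceq : x c = x a := hb c hcn a (by omega) h
      have := hglb a c hac hcn hceq.symm
      omega
    have hda : d ≠ a := fun h => hxca (by rw [← hdabs, h])
    have hdb : d ≠ a + g := by
      intro h
      apply hxca
      rw [← hdabs, h, ← hxab]
    rcases lt_or_gt_of_ne hdc with h | h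
    · rcases lt_or_gt_of_ne hda with h2 | h2
      · exact hgoal ⟨d, a, c, a + g, h2, hac, hca, hab, hxdc, hxab⟩
      · have := hglb d c h hcn hxdc
        omega
    · rcases lt_or_gt_of_ne hdb with h2 | h2
      · have := hglb c d h hd hxdc.symm
        omega
      · exact hgoal ⟨a, c, a + g, d, hac, hca, h2, hd, hxab, hxdc.symm⟩
  have hg3 : g ≤ 3 := by
    by_contra h
    have h1 := hint (a+1) (by omega) (by omega)
    have h2 := hint (a+2) (by omega) (by omega)
    have h3 := hint (a+3) (by omega) (by omega)
    rcases h1 with h1|h1 <;> rcases h2 with h2|h2 <;> rcases h3 with h3|h3 <;> omega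
  rcases (show g = 2 ∨ g = 3 by omega) with hg' | hg'
  · -- g = 2
    rw [hg'] at hxab hab
    have hc := hint (a+1) (by omega) (by omega)
    rcases Nat.mod_two_eq_zero_or_one a with hpa | hpa
    · -- a even
      have ha3n : a + 3 < n := by omega
      obtain ⟨hle1, hp1⟩ := hblk a hpa (by omega)
      obtain ⟨hle2, hp2⟩ := hblk (a+2) (by omega) (by
        rw [show a + 2 + 1 = a + 3 by omega]; exact ha3n)
      rw [show a + 2 + 1 = a + 3 by omega] at hle2 hp2
      have hlt1 : x a < x (a+1) := lt_of_le_of_ne hle1 (ha a (by omega))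
      have hlt2 : x (a+2) < x (a+3) := lt_of_le_of_ne hle2 (by
        have := ha (a+2) (by rw [show a + 2 + 1 = a + 3 by omega]; exact ha3n)
        rwa [show a + 2 + 1 = a + 3 by omega] at this)
      rcases hc with hc | hc
      · subst hc
        rcases mul_pos_iff.mp hp1 with ⟨s1, s2⟩ | ⟨s1, s2⟩
        · have := hmi2 a (by omega)
          rw [abs_of_pos s1, abs_of_pos s2] at this
          linarith
        · have s3 : x (a+2) < 0 := by linarith [hxab]
          have s4 : x (a+3) < 0 := by
            rcases mul_pos_iff.mp hp2 with ⟨t1, t2⟩ | ⟨t1, t2⟩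
            · linarith
            · exact t2
          have h1 : |x (a+1)| < |x (a+3)| := hminlt (a+3) ha3n (by omega)
          have h2 : |x (a+3)| < |x a| := by
            rw [abs_of_neg s4, abs_of_neg s1]
            linarith [hlt2, hxab]
          exact hgap a hpa (by omega) ⟨a+3, ha3n, Or.inr ⟨h1, h2⟩⟩
      · subst hc
        rcases mul_pos_iff.mp hp1 with ⟨s1, s2⟩ | ⟨s1, s2⟩
        · have s3 : 0 < x (a+2) := by linarith [hxab]
          have s4 : 0 < x (a+3) := by linarith
          have h1 : |x a| < |x (a+3)| := by
            rw [abs_of_pos s4, abs_of_pos s1]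
            linarith [hlt2, hxab]
          have h2 : |x (a+3)| < |x (a+1)| := hmaxlt (a+3) ha3n (by omega)
          exact hgap a hpa (by omega) ⟨a+3, ha3n, Or.inl ⟨h1, h2⟩⟩
        · have := hma2 a (by omega)
          rw [abs_of_neg s1, abs_of_neg s2] at this
          linarith
    · -- a odd
      obtain ⟨hle1, hp1⟩ := hblk (a-1) (by omega) (by
        rw [show a - 1 + 1 = a by omega]; omega)
      rw [show a - 1 + 1 = a by omega] at hle1 hp1
      obtain ⟨hle2, hp2⟩ := hblk (a+1) (by omega) (by
        rw [show a + 1 + 1 = a + 2 by omega]; omega)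
      rw [show a + 1 + 1 = a + 2 by omega] at hle2 hp2
      have hlt1 : x (a-1) < x a := lt_of_le_of_ne hle1 (by
        have := ha (a-1) (by rw [show a - 1 + 1 = a by omega]; omega)
        rwa [show a - 1 + 1 = a by omega] at this)
      have hlt2 : x (a+1) < x (a+2) := lt_of_le_of_ne hle2 (by
        have := ha (a+1) (by rw [show a + 1 + 1 = a + 2 by omega]; omega)
        rwa [show a + 1 + 1 = a + 2 by omega] at this)
      rcases hc with hc | hc
      · subst hc
        rcases mul_pos_iff.mp hp2 with ⟨s1, s2⟩ | ⟨s1, s2⟩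
        · have sxa : 0 < x a := by linarith [hxab]
          have s3 : 0 < x (a-1) := by
            rcases mul_pos_iff.mp hp1 with ⟨t1, t2⟩ | ⟨t1, t2⟩
            · exact t1
            · linarith
          have h1 : |x (a+1)| < |x (a-1)| := hminlt (a-1) (by omega) (by omega)
          have h2 : |x (a-1)| < |x (a+2)| := by
            rw [abs_of_pos s3, abs_of_pos s2]
            linarith [hxab]
          exact hgap (a+1) (by omega) (by rw [show a + 1 + 1 = a + 2 by omega]; omega)
            ⟨a-1, by omega, by rw [show a + 1 + 1 = a + 2 by omega]; exact Or.inl ⟨h1, h2⟩⟩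
        · have := hmi2 (a+2) (by omega)
          rw [abs_of_neg s1, abs_of_neg s2] at this
          linarith
      · subst hc
        rcases mul_pos_iff.mp hp2 with ⟨s1, s2⟩ | ⟨s1, s2⟩
        · have := hma2 (a+2) (by omega)
          rw [abs_of_pos s1, abs_of_pos s2] at this
          linarith
        · have sxa : x a < 0 := by linarith [hxab]
          have s3 : x (a-1) < 0 := by
            rcases mul_pos_iff.mp hp1 with ⟨t1, t2⟩ | ⟨t1, t2⟩
            · linarith
            · exact t1
          have h1 : |x (a+2)| < |x (a-1)| := by
            rw [abs_of_neg s2, abs_of_neg s3]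
            linarith [hxab]
          have h2 : |x (a-1)| < |x (a+1)| := hmaxlt (a-1) (by omega) (by omega)
          exact hgap (a+1) (by omega) (by rw [show a + 1 + 1 = a + 2 by omega]; omega)
            ⟨a-1, by omega, by rw [show a + 1 + 1 = a + 2 by omega]; exact Or.inr ⟨h1, h2⟩⟩
  · -- g = 3
    rw [hg'] at hxab hab
    have hi1 := hint (a+1) (by omega) (by omega)
    have hi2 := hint (a+2) (by omega) (by omega)
    rcases Nat.mod_two_eq_zero_or_one a with hpa | hpa
    · -- a even
      obtain ⟨hle1, hp1⟩ := hblk a hpa (by omega)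
      obtain ⟨hle2, hp2⟩ := hblk (a+2) (by omega) (by
        rw [show a + 2 + 1 = a + 3 by omega]; omega)
      rw [show a + 2 + 1 = a + 3 by omega] at hle2 hp2
      have hgapA := hgap a hpa (by omega)
      have hgapB := hgap (a+2) (by omega) (by
        rw [show a + 2 + 1 = a + 3 by omega]; omega)
      rw [show a + 2 + 1 = a + 3 by omega] at hgapB
      have hlt1 : x a < x (a+1) := lt_of_le_of_ne hle1 (ha a (by omega))
      have hlt2 : x (a+2) < x (a+3) := lt_of_le_of_ne hle2 (by
        have := ha (a+2) (by rw [show a + 2 + 1 = a + 3 by omega]; omega)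
        rwa [show a + 2 + 1 = a + 3 by omega] at this)
      rcases mul_pos_iff.mp hp1 with ⟨s1, s2⟩ | ⟨s1, s2⟩
      · -- positive
        have s3 : 0 < x (a+3) := by linarith [hxab]
        have s4 : 0 < x (a+2) := by
          rcases mul_pos_iff.mp hp2 with ⟨t1, t2⟩ | ⟨t1, t2⟩
          · exact t1
          · linarith
        rcases hi1 with h1 | h1
        · -- a+1 = mi : impossible
          subst h1
          have := hmi2 a (by omega)
          rw [abs_of_pos s1, abs_of_pos s2] at this
          linarith
        subst h1
        rcases hi2 with h2 | h2
        swap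
        · omega
        subst h2
        have hclass : ∀ j, j < n → j ≠ a+1 → j ≠ a+2 → |x j| = |x a| := by
          intro j hj hj1 hj2
          by_contra hne
          rcases lt_or_gt_of_ne hne with h | h
          · have hlo : |x (a+2)| < |x j| := hminlt j hj hj2
            exact hgapB ⟨j, hj, Or.inl ⟨hlo, by rw [← hxab]; exact h⟩⟩
          · have hhi : |x j| < |x (a+1)| := hmaxlt j hj hj1
            exact hgapA ⟨j, hj, Or.inl ⟨h, hhi⟩⟩
        obtain ⟨p, -, hup⟩ := hpartner a (by omega) (by omega) (by omega)
        have e1 := hup (a+3) ⟨by omega, by omega,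
          hclass (a+3) (by omega) (by omega) (by omega)⟩
        by_cases haz : a = 0
        · have e2 := hup 4 ⟨by omega, by omega,
            hclass 4 (by omega) (by omega) (by omega)⟩
          omega
        · have e2 := hup (a-1) ⟨by omega, by omega,
            hclass (a-1) (by omega) (by omega) (by omega)⟩
          omega
      · -- negative
        have s3 : x (a+3) < 0 := by linarith [hxab]
        have s4 : x (a+2) < 0 := by
          rcases mul_pos_iff.mp hp2 with ⟨t1, t2⟩ | ⟨t1, t2⟩
          · linarith
          · exact t1
        rcases hi1 with h1 | h1
        swap
        · -- a+1 = ma : impossible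
          subst h1
          have := hma2 a (by omega)
          rw [abs_of_neg s1, abs_of_neg s2] at this
          linarith
        subst h1
        rcases hi2 with h2 | h2
        · omega
        subst h2
        have hclass : ∀ j, j < n → j ≠ a+1 → j ≠ a+2 → |x j| = |x a| := by
          intro j hj hj1 hj2
          by_contra hne
          rcases lt_or_gt_of_ne hne with h | h
          · have hlo : |x (a+1)| < |x j| := hminlt j hj hj1
            exact hgapA ⟨j, hj, Or.inr ⟨hlo, h⟩⟩
          · have hhi : |x j| < |x (a+2)| := hmaxlt j hj hj2
            exact hgapB ⟨j, hj, Or.inr ⟨by rw [← hxab]; exact h, hhi⟩⟩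
        obtain ⟨p, -, hup⟩ := hpartner a (by omega) (by omega) (by omega)
        have e1 := hup (a+3) ⟨by omega, by omega,
          hclass (a+3) (by omega) (by omega) (by omega)⟩
        by_cases haz : a = 0
        · have e2 := hup 4 ⟨by omega, by omega,
            hclass 4 (by omega) (by omega) (by omega)⟩
          omega
        · have e2 := hup (a-1) ⟨by omega, by omega,
            hclass (a-1) (by omega) (by omega) (by omega)⟩
          omega
    · -- a odd : block (a+1, a+2) consists of mi and ma, x a strictly between
      have hgapB := hgap (a+1) (by omega) (by
        rw [show a + 1 + 1 = a + 2 by omega]; omega)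
      rw [show a + 1 + 1 = a + 2 by omega] at hgapB
      rcases hi1 with h1 | h1 <;> rcases hi2 with h2 | h2
      · omega
      · subst h1; subst h2
        have hlo : |x (a+1)| < |x a| := hminlt a (by omega) (by omega)
        have hhi : |x a| < |x (a+2)| := hmaxlt a (by omega) (by omega)
        exact hgapB ⟨a, by omega, Or.inl ⟨hlo, hhi⟩⟩
      · subst h1; subst h2
        have hlo : |x (a+2)| < |x a| := hminlt a (by omega) (by omega)
        have hhi : |x a| < |x (a+1)| := hmaxlt a (by omega) (by omega)
        exact hgapB ⟨a, by omega, Or.inr ⟨hlo, hhi⟩⟩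
      · omega

/-- for a pointer list of length > 4 with no adjacent equal
entries in which entries of equal absolute value are equal, a context
directed block swap is applicable. -/
theorem stmt15 (P : List ℤ) (hP : IsPointerList P) (hlen : 4 < P.length)
    (ha : ∀ i, i + 1 < P.length → P.getD i 0 ≠ P.getD (i+1) 0)
    (hb : ∀ i < P.length, ∀ j < P.length,
      |P.getD i 0| = |P.getD j 0| → P.getD i 0 = P.getD j 0) :
    ∃ i j k l, i < j ∧ j < k ∧ k < l ∧ l < P.length ∧
      P.getD i 0 = P.getD k 0 ∧ P.getD j 0 = P.getD l 0 := by
  obtain ⟨h1, _, h3, h4, h5, h6, h7⟩ := hP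
  exact stmt15_aux (fun i => P.getD i 0) P.length h1 hlen h3 h4 h5 h6 h7 ha hb
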